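/- The left I_n-module P_n is isomorphic to the quotient module I_n / (I_n∂_1 + ⋯ + I_n∂_n), and P_n is a projective left I_n-module. -/

import Mathlib

set_option synthInstance.maxHeartbeats 1000000
set_option maxHeartbeats 2000000

open MvPolynomial

/-- Multiplication by `x_i`, as a `K`-linear endomorphism of `K[x_1,…,x_n]`. -/
noncomputable def xOp (K : Type*) [Field K] (n : ℕ) (i : Fin n) :
    Module.End K (MvPolynomial (Fin n) K) :=
  LinearMap.mulLeft K (X i)

/-- The formal partial derivative `∂/∂x_i`. -/
noncomputable def dOp (K : Type*) [Field K] (n : ℕ) (i : Fin n) :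
    Module.End K (MvPolynomial (Fin n) K) :=
  (pderiv i).toLinearMap

/-- The integration operator `∫_i`, determined by `∫_i(x^α) = x^α·x_i/(α_i+1)`. -/
noncomputable def intOp (K : Type*) [Field K] (n : ℕ) (i : Fin n) :
    Module.End K (MvPolynomial (Fin n) K) :=
  (basisMonomials (Fin n) K).constr K
    (fun α => (((α i : ℕ) : K) + 1)⁻¹ • (monomial (α + Finsupp.single i 1) (1 : K)))

/-- The algebra `I_n` of polynomial integro-differential operators:
the `K`-subalgebra of `End_K(P_n)` generated by the `X_i`, `∂_i` and `∫_i`. -/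
noncomputable def IDO (K : Type*) [Field K] (n : ℕ) :
    Subalgebra K (Module.End K (MvPolynomial (Fin n) K)) :=
  Algebra.adjoin K (Set.range (xOp K n) ∪ Set.range (dOp K n) ∪ Set.range (intOp K n))

/-- `X_i` as an element of `I_n`. -/
noncomputable def xElt (K : Type*) [Field K] (n : ℕ) (i : Fin n) : IDO K n :=
  ⟨xOp K n i, Algebra.subset_adjoin (Or.inl (Or.inl ⟨i, rfl⟩))⟩

/-- `∂_i` as an element of `I_n`. -/
noncomputable def dElt (K : Type*) [Field K] (n : ℕ) (i : Fin n) : IDO K n :=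
  ⟨dOp K n i, Algebra.subset_adjoin (Or.inl (Or.inr ⟨i, rfl⟩))⟩

/-- `∫_i` as an element of `I_n`. -/
noncomputable def intElt (K : Type*) [Field K] (n : ℕ) (i : Fin n) : IDO K n :=
  ⟨intOp K n i, Algebra.subset_adjoin (Or.inr ⟨i, rfl⟩)⟩

/-- `P_n` is a module over `I_n` via the evaluation action of endomorphisms on polynomials. -/
noncomputable instance instModuleIDO (K : Type*) [Field K] (n : ℕ) :
    Module (IDO K n) (MvPolynomial (Fin n) K) :=
  Module.compHom (MvPolynomial (Fin n) K) (Subalgebra.val (IDO K n)).toRingHom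

section Aux

variable (K : Type*) [Field K] [CharZero K] (n : ℕ)

set_option linter.unusedSectionVars false

lemma ido_smul_def (a : IDO K n) (p : MvPolynomial (Fin n) K) :
    a • p = (a : Module.End K (MvPolynomial (Fin n) K)) p := rfl

lemma intOp_monomial_one (i : Fin n) (α : Fin n →₀ ℕ) :
    intOp K n i (monomial α (1:K)) =
      (((α i : ℕ) : K) + 1)⁻¹ • (monomial (α + Finsupp.single i 1) (1 : K)) :=
  (basisMonomials (Fin n) K).constr_basis K _ α

lemma tOp_monomial (i : Fin n) (α : Fin n →₀ ℕ) :
    (1 - intOp K n i * dOp K n i) (monomial α (1:K)) =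
      if α i = 0 then monomial α 1 else 0 := by
  have hd : dOp K n i (monomial α (1:K)) = ((α i : ℕ) : K) • monomial (α - Finsupp.single i 1) (1:K) := by
    simp [dOp, pderiv_monomial, smul_monomial]
  by_cases h : α i = 0
  · simp [LinearMap.sub_apply, Module.End.mul_apply, hd, h]
  · rw [LinearMap.sub_apply, Module.End.mul_apply, hd, map_smul, intOp_monomial_one]
    have hb : (α - Finsupp.single i 1) + Finsupp.single i 1 = α := by
      ext j
      by_cases hj : j = i
      · subst hj; simp; omega
      · simp [Finsupp.single_apply, Ne.symm hj]
    have hc : ((((α - Finsupp.single i 1 : Fin n →₀ ℕ)) i : ℕ) : K) + 1 = ((α i : ℕ) : K) := by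
      have h2 : ((α - Finsupp.single i 1 : Fin n →₀ ℕ)) i = α i - 1 := by simp
      rw [h2]
      have h3 : α i - 1 + 1 = α i := Nat.succ_pred_eq_of_pos (Nat.pos_of_ne_zero h)
      exact_mod_cast congrArg (fun m : ℕ => (m : K)) h3
    rw [hb, hc, smul_smul, mul_inv_cancel₀ (by exact_mod_cast h), one_smul, if_neg h,
      Module.End.one_apply, sub_self]

lemma prodT_monomial (l : List (Fin n)) (α : Fin n →₀ ℕ) :
    ((l.map (fun i => 1 - intOp K n i * dOp K n i)).prod) (monomial α (1:K)) =
      if ∀ i ∈ l, α i = 0 then monomial α 1 else 0 := by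
  classical
  induction l with
  | nil => simp
  | cons j l ih =>
    rw [List.map_cons, List.prod_cons, Module.End.mul_apply, ih]
    by_cases h : ∀ i ∈ l, α i = 0
    · rw [if_pos h, tOp_monomial]
      by_cases hja : α j = 0
      · rw [if_pos hja, if_pos]
        intro i hi
        rcases List.mem_cons.mp hi with rfl | hi
        · exact hja
        · exact h i hi
      · rw [if_neg hja, if_neg]
        intro hall; exact hja (hall j List.mem_cons_self)
    · rw [if_neg h, map_zero, if_neg]
      intro hall; exact h fun i hi => hall i (List.mem_cons_of_mem j hi)

lemma piOp_monomial (α : Fin n →₀ ℕ) (a : K) :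
    (((List.finRange n).map (fun i => 1 - intOp K n i * dOp K n i)).prod) (monomial α a) =
      if α = 0 then C a else 0 := by
  have h1 : (monomial α) a = a • monomial α (1:K) := by simp [smul_monomial]
  rw [h1, map_smul, prodT_monomial]
  by_cases h : α = 0
  · subst h
    rw [if_pos (by simp), if_pos rfl, smul_monomial, monomial_zero']
    simp
  · rw [if_neg h, if_neg, smul_zero]
    intro hall
    exact h (Finsupp.ext fun i => hall i (List.mem_finRange i))

lemma piOp_apply (p : MvPolynomial (Fin n) K) :
    (((List.finRange n).map (fun i => 1 - intOp K n i * dOp K n i)).prod) p =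
      C (constantCoeff p) := by
  induction p using MvPolynomial.induction_on' with
  | monomial u a =>
    rw [piOp_monomial, constantCoeff_monomial]
    by_cases h : u = 0
    · rw [if_pos h, if_pos h]
    · rw [if_neg h, if_neg h, map_zero]
  | add p q hp hq =>
    rw [map_add, hp, hq, map_add, map_add]

lemma mulLeft_mem (p : MvPolynomial (Fin n) K) : LinearMap.mulLeft K p ∈ IDO K n := by
  induction p using MvPolynomial.induction_on with
  | C a =>
    have : LinearMap.mulLeft K (C a : MvPolynomial (Fin n) K) =
        algebraMap K (Module.End K (MvPolynomial (Fin n) K)) a := by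
      refine LinearMap.ext fun q => ?_
      simp [LinearMap.mulLeft_apply, Module.algebraMap_end_apply, smul_eq_C_mul]
    rw [this]
    exact Subalgebra.algebraMap_mem _ a
  | add p q hp hq =>
    have : LinearMap.mulLeft K (p + q) = LinearMap.mulLeft K p + LinearMap.mulLeft K q := by
      ext r; simp [add_mul]
    rw [this]; exact add_mem hp hq
  | mul_X p i hp =>
    have : LinearMap.mulLeft K (p * X i) =
        LinearMap.mulLeft K p * LinearMap.mulLeft K (X i) := by
      ext r; simp [mul_assoc]
    rw [this]
    exact mul_mem hp (xElt K n i).2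

lemma one_sub_prod_mem (l : List (Fin n)) :
    (1 : IDO K n) - ((l.map (fun i => 1 - intElt K n i * dElt K n i)).prod) ∈
      ⨆ i : Fin n, Submodule.span (IDO K n) {dElt K n i} := by
  classical
  induction l with
  | nil =>
    simp only [List.map_nil, List.prod_nil]
    have h0 : (1 : IDO K n) - 1 = 0 := sub_self (1 : IDO K n)
    rw [h0]
    exact Submodule.zero_mem (⨆ i : Fin n, Submodule.span (IDO K n) {dElt K n i})
  | cons j l ih =>
    rw [List.map_cons, List.prod_cons]
    set u := intElt K n j * dElt K n j with hu
    set Q := ((l.map (fun i => 1 - intElt K n i * dElt K n i)).prod) with hQ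
    have key : (1 : IDO K n) - (1 - u) * Q = (1 - u) * (1 - Q) + u := by
      apply Subtype.ext
      push_cast
      rw [mul_sub (1 - (u : Module.End K (MvPolynomial (Fin n) K))) 1 Q, mul_one]
      abel
    rw [key]
    refine Submodule.add_mem _ (Submodule.smul_mem _ _ ih) ?_
    refine le_iSup (fun i => Submodule.span (IDO K n) {dElt K n i}) j ?_
    exact Submodule.mem_span_singleton.mpr ⟨intElt K n j, rfl⟩

/-- `π` as an element of `I_n`. -/
noncomputable def piElt : IDO K n :=
  ((List.finRange n).map (fun i => 1 - intElt K n i * dElt K n i)).prod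

lemma piElt_val : ((piElt K n : IDO K n) : Module.End K (MvPolynomial (Fin n) K)) =
    ((List.finRange n).map (fun i => 1 - intOp K n i * dOp K n i)).prod := by
  unfold piElt
  change (Subalgebra.val (IDO K n)) _ = _
  rw [map_list_prod, List.map_map]
  rfl

/-- The section `P_n → I_n`, `p ↦ (mulLeft p) ∘ π`. -/
noncomputable def secMap : MvPolynomial (Fin n) K →ₗ[IDO K n] IDO K n where
  toFun p := ⟨LinearMap.mulLeft K p, mulLeft_mem K n p⟩ * piElt K n
  map_add' p q := by
    apply Subtype.ext
    show LinearMap.mulLeft K (p + q) * _ = LinearMap.mulLeft K p * _ + LinearMap.mulLeft K q * _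
    apply LinearMap.ext; intro r
    simp [Module.End.mul_apply, add_mul]
  map_smul' a p := by
    apply Subtype.ext
    show LinearMap.mulLeft K (a • p) *
        ((piElt K n : IDO K n) : Module.End K (MvPolynomial (Fin n) K)) =
      (a : Module.End K (MvPolynomial (Fin n) K)) *
        (LinearMap.mulLeft K p * ((piElt K n : IDO K n) : Module.End K (MvPolynomial (Fin n) K)))
    apply LinearMap.ext; intro q
    rw [piElt_val]
    simp only [Module.End.mul_apply, LinearMap.mulLeft_apply, piOp_apply, ido_smul_def]
    rw [show p * C (constantCoeff q) = constantCoeff q • p from by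
      rw [smul_eq_C_mul]; ring]
    rw [map_smul, smul_eq_C_mul]
    ring

end Aux

/-- The left `I_n`-module `P_n` is isomorphic to the quotient `I_n / (I_n∂_1 + ⋯ + I_n∂_n)`
(expressed by a surjective `I_n`-linear map `I_n → P_n` with kernel `I_n∂_1 + ⋯ + I_n∂_n`),
and `P_n` is a projective left `I_n`-module. -/
theorem statement16 (K : Type*) [Field K] [CharZero K] (n : ℕ) :
    (∃ f : IDO K n →ₗ[IDO K n] MvPolynomial (Fin n) K, Function.Surjective f ∧
      LinearMap.ker f = ⨆ i : Fin n, Submodule.span (IDO K n) {dElt K n i}) ∧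
    Module.Projective (IDO K n) (MvPolynomial (Fin n) K) := by
  classical
  set f : IDO K n →ₗ[IDO K n] MvPolynomial (Fin n) K :=
    LinearMap.toSpanSingleton (IDO K n) (MvPolynomial (Fin n) K) 1 with hf
  have hfa : ∀ a : IDO K n, f a = (a : Module.End K (MvPolynomial (Fin n) K)) 1 := by
    intro a
    rw [hf, LinearMap.toSpanSingleton_apply]
    exact ido_smul_def K n a 1
  have hsec : ∀ p, f (secMap K n p) = p := by
    intro p
    rw [hfa]
    show (LinearMap.mulLeft K p * ((piElt K n : IDO K n) : Module.End K (MvPolynomial (Fin n) K))) 1 = p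
    rw [piElt_val]
    simp [Module.End.mul_apply, piOp_apply]
  have hsurj : Function.Surjective f := fun p => ⟨secMap K n p, hsec p⟩
  refine ⟨⟨f, hsurj, ?_⟩, ?_⟩
  · apply le_antisymm
    · intro a ha
      have h1 : (a : Module.End K (MvPolynomial (Fin n) K)) 1 = 0 := by
        rw [← hfa]; exact ha
      have hzero : a * piElt K n = 0 := by
        apply Subtype.ext
        rw [MulMemClass.coe_mul, ZeroMemClass.coe_zero, piElt_val]
        apply LinearMap.ext; intro p
        rw [Module.End.mul_apply, piOp_apply, C_eq_smul_one, map_smul, h1, smul_zero,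
          LinearMap.zero_apply]
      have ha2 : a = a • ((1 : IDO K n) - piElt K n) := by
        apply Subtype.ext
        have h2 : (a : Module.End K (MvPolynomial (Fin n) K)) *
            ((piElt K n : IDO K n) : Module.End K (MvPolynomial (Fin n) K)) = 0 :=
          congrArg Subtype.val hzero
        show (a : Module.End K (MvPolynomial (Fin n) K)) =
          (a : Module.End K (MvPolynomial (Fin n) K)) *
            ((1 : Module.End K (MvPolynomial (Fin n) K)) -
              ((piElt K n : IDO K n) : Module.End K (MvPolynomial (Fin n) K)))
        rw [mul_sub, mul_one, h2, sub_zero]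
      rw [ha2]
      exact Submodule.smul_mem _ _ (one_sub_prod_mem K n (List.finRange n))
    · refine iSup_le fun i => ?_
      rw [Submodule.span_le, Set.singleton_subset_iff]
      refine LinearMap.mem_ker.mpr ?_
      rw [hfa]
      show dOp K n i 1 = 0
      simp [dOp]
  · refine Module.Projective.of_split (secMap K n) f ?_
    apply LinearMap.ext; intro p
    simpa using hsec p
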